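/- In a C-space, every irreducible closed set is the closure of a directed subset (with respect to the specialization preorder), and conversely the closure of every directed subset is irreducible closed. -/
import Mathlib


/-- The specialization preorder: x ≤ y iff every open set containing x contains y. -/
def sle {X : Type*} [TopologicalSpace X] (x y : X) : Prop :=
  ∀ U : Set X, IsOpen U → x ∈ U → y ∈ U

/-- The core of a point. -/
def core {X : Type*} [TopologicalSpace X] (x : X) : Set X := {y | sle x y}

lemma sle_refl {X : Type*} [TopologicalSpace X] (x : X) : sle x x := fun _ _ h => h

lemma mem_of_sle {X : Type*} [TopologicalSpace X] {C : Set X} (hcl : IsClosed C)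
    {u z : X} (h : sle u z) (hz : z ∈ C) : u ∈ C := by
  by_contra hu
  exact (h Cᶜ hcl.isOpen_compl hu) hz

/-- In a C-space, the irreducible closed sets are exactly the
closures of directed subsets (w.r.t. the specialization preorder). -/
theorem stmt_11 {X : Type*} [TopologicalSpace X]
    (hC : ∀ (x : X) (U : Set X), IsOpen U → x ∈ U →
      ∃ u : X, x ∈ interior (core u) ∧ core u ⊆ U) :
    ∀ C : Set X,
      (IsClosed C ∧ C.Nonempty ∧
        ∀ A B : Set X, IsClosed A → IsClosed B → C ⊆ A ∪ B → C ⊆ A ∨ C ⊆ B) ↔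
      (∃ D : Set X, D.Nonempty ∧
        (∀ a ∈ D, ∀ b ∈ D, ∃ c ∈ D, sle a c ∧ sle b c) ∧ C = closure D) := by
  intro C
  constructor
  · rintro ⟨hcl, ⟨x0, hx0⟩, hirr⟩
    refine ⟨{u | u ∈ C ∧ ∃ x ∈ C, x ∈ interior (core u)}, ?_, ?_, ?_⟩
    · obtain ⟨u, hu1, _⟩ := hC x0 Set.univ isOpen_univ (Set.mem_univ x0)
      exact ⟨u, mem_of_sle hcl (interior_subset hu1) hx0, x0, hx0, hu1⟩
    · rintro a ⟨haC, x, hxC, hx⟩ b ⟨hbC, y, hyC, hy⟩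
      have h1 : ¬ C ⊆ (interior (core a))ᶜ := fun h => (h hxC) hx
      have h2 : ¬ C ⊆ (interior (core b))ᶜ := fun h => (h hyC) hy
      have hnot : ¬ C ⊆ (interior (core a))ᶜ ∪ (interior (core b))ᶜ := fun h =>
        (hirr _ _ isOpen_interior.isClosed_compl isOpen_interior.isClosed_compl h).elim h1 h2
      obtain ⟨z, hzC, hz⟩ := Set.not_subset.mp hnot
      simp only [Set.mem_union, Set.mem_compl_iff, not_or, not_not] at hz
      obtain ⟨w, hzw, hwsub⟩ := hC z (interior (core a) ∩ interior (core b))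
        (isOpen_interior.inter isOpen_interior) ⟨hz.1, hz.2⟩
      have hww : w ∈ core w := sle_refl w
      have hwC : w ∈ C := mem_of_sle hcl (interior_subset hzw) hzC
      exact ⟨w, ⟨hwC, z, hzC, hzw⟩, interior_subset (hwsub hww).1,
        interior_subset (hwsub hww).2⟩
    · refine Set.Subset.antisymm ?_ ?_
      · intro x hx
        rw [mem_closure_iff]
        intro U hU hxU
        obtain ⟨u, hu1, hu2⟩ := hC x U hU hxU
        exact ⟨u, hu2 (sle_refl u),
          mem_of_sle hcl (interior_subset hu1) hx, x, hx, hu1⟩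
      · exact closure_minimal (fun u hu => hu.1) hcl
  · rintro ⟨D, ⟨d0, hd0⟩, hdir, rfl⟩
    refine ⟨isClosed_closure, ⟨d0, subset_closure hd0⟩, ?_⟩
    intro A B hA hB hsub
    by_contra h
    push_neg at h
    obtain ⟨x, hx, hxA⟩ := Set.not_subset.mp h.1
    obtain ⟨y, hy, hyB⟩ := Set.not_subset.mp h.2
    obtain ⟨d, hdA, hdD⟩ := (mem_closure_iff.mp hx) Aᶜ hA.isOpen_compl hxA
    obtain ⟨e, heB, heD⟩ := (mem_closure_iff.mp hy) Bᶜ hB.isOpen_compl hyB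
    obtain ⟨c, hcD, hdc, hec⟩ := hdir d hdD e heD
    rcases hsub (subset_closure hcD) with hcA | hcB
    · exact (hdc Aᶜ hA.isOpen_compl hdA) hcA
    · exact (hec Bᶜ hB.isOpen_compl heB) hcB
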